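/- Under the standing setup, suppose T_g is not a t-intersecting family, |T_f| = 1, and T_f ⊆ T_g. Then |T_g| ≤ (t+1)(ℓ−t)+1. Moreover, if t ≥ 2 and |T_g| = (t+1)(ℓ−t)+1, then (F,G) is isomorphic to (C₂(k,t;ℓ), C₁(ℓ,t)), where C₁(ℓ,t) = {[ℓ+1]\{i} : i ∈ [t+1]} ∪ {G ∈ C([n],ℓ) : [t+1] ⊆ G} and C₂(k,t;ℓ) = {F ∈ C([n],k) : |F∩[t+1]| = t and |F∩[t+2,ℓ+1]| ≥ 1} ∪ {F ∈ C([n],k) : [t+1] ⊆ F}. -/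

import Mathlib

/-- The interval `[a,b] = {a, a+1, …, b}` as a finset of naturals. -/
def Iv (a b : ℕ) : Finset ℕ := Finset.Icc a b

/-- `ksubsets S k` is the family of all `k`-element subsets of `S`. -/
def ksubsets (S : Finset ℕ) (k : ℕ) : Finset (Finset ℕ) :=
  S.powerset.filter (fun F => F.card = k)

/-- Families `F` and `G` are cross `t`-intersecting. -/
def crossInt (t : ℕ) (F G : Finset (Finset ℕ)) : Prop :=
  ∀ A ∈ F, ∀ B ∈ G, t ≤ (A ∩ B).card

/-- The `t`-covering number of a family of subsets of `[n]`. -/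
noncomputable def tau (n t : ℕ) (F : Finset (Finset ℕ)) : ℕ :=
  sInf {c : ℕ | ∃ T : Finset ℕ, T ⊆ Finset.Icc 1 n ∧ T.card = c ∧ ∀ A ∈ F, t ≤ (T ∩ A).card}

/-- The collection of all `t`-covers of `F` of size `t+1`. -/
def covers (n t : ℕ) (F : Finset (Finset ℕ)) : Finset (Finset ℕ) :=
  (Finset.Icc 1 n).powerset.filter (fun T => T.card = t + 1 ∧ ∀ A ∈ F, t ≤ (T ∩ A).card)

/-- `F ⊆ ksubsets S k` and `G ⊆ ksubsets S l` form a maximal cross `t`-intersecting pair. -/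
def maximalCrossIn (S : Finset ℕ) (k l t : ℕ) (F G : Finset (Finset ℕ)) : Prop :=
  F ⊆ ksubsets S k ∧ G ⊆ ksubsets S l ∧ crossInt t F G ∧
  ∀ F' G' : Finset (Finset ℕ), F' ⊆ ksubsets S k → G' ⊆ ksubsets S l →
    crossInt t F' G' → F ⊆ F' → G ⊆ G' → F = F' ∧ G = G'

/-- Elementwise image of a family under a permutation. -/
def mapFam (σ : Equiv.Perm ℕ) (F : Finset (Finset ℕ)) : Finset (Finset ℕ) :=
  F.image (fun A => A.image σ)

/-- `σ` is a permutation of `[n]` (maps `[n]` into, hence onto, itself). -/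
def permOn (n : ℕ) (σ : Equiv.Perm ℕ) : Prop := ∀ x ∈ Finset.Icc 1 n, σ x ∈ Finset.Icc 1 n

/-- The pairs `(F, G)` and `(F', G')` are isomorphic via a permutation of `[n]`. -/
def isoPair (n : ℕ) (F G F' G' : Finset (Finset ℕ)) : Prop :=
  ∃ σ : Equiv.Perm ℕ, permOn n σ ∧ mapFam σ F = F' ∧ mapFam σ G = G'

/-- `F` and `F'` are isomorphic via a permutation of `[n]`. -/
def isoFam (n : ℕ) (F F' : Finset (Finset ℕ)) : Prop :=
  ∃ σ : Equiv.Perm ℕ, permOn n σ ∧ mapFam σ F = F'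

/-- Construction `𝒜(k,t) = {F ∈ C([n],k) : |F ∩ [t+2]| ≥ t+1}`. -/
def famA (n k t : ℕ) : Finset (Finset ℕ) :=
  (ksubsets (Iv 1 n) k).filter (fun F => t + 1 ≤ (F ∩ Iv 1 (t+2)).card)

/-- Construction `𝒞₁(ℓ,t) = {[ℓ+1]\{i} : i ∈ [t+1]} ∪ {G ∈ C([n],ℓ) : [t+1] ⊆ G}`. -/
def famC1 (n l t : ℕ) : Finset (Finset ℕ) :=
  (Iv 1 (t+1)).image (fun i => (Iv 1 (l+1)).erase i) ∪
  (ksubsets (Iv 1 n) l).filter (fun G => Iv 1 (t+1) ⊆ G)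

/-- Construction `𝒞₂(k,t;ℓ)`. -/
def famC2 (n k t l : ℕ) : Finset (Finset ℕ) :=
  (ksubsets (Iv 1 n) k).filter
    (fun F => (F ∩ Iv 1 (t+1)).card = t ∧ 1 ≤ (F ∩ Iv (t+2) (l+1)).card) ∪
  (ksubsets (Iv 1 n) k).filter (fun F => Iv 1 (t+1) ⊆ F)

/-- Construction `ℋ(k,t;X,Y) = {F ∈ C([n],k) : [t] ⊆ F, |F∩Y| ≥ 1} ∪ {(X∪[t])\{i} : i ∈ [t]}`. -/
def famH (n k t : ℕ) (X Y : Finset ℕ) : Finset (Finset ℕ) :=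
  (ksubsets (Iv 1 n) k).filter (fun F => Iv 1 t ⊆ F ∧ 1 ≤ (F ∩ Y).card) ∪
  (Iv 1 t).image (fun i => (X ∪ Iv 1 t).erase i)

/-- Construction `ℬ(k;(a₁,a₂,a₃,a₄))`. -/
def famB (n k a1 a2 a3 a4 : ℕ) : Finset (Finset ℕ) :=
  (ksubsets (Iv 1 n) k).filter
    (fun F => ({a1, a2} : Finset ℕ) ⊆ F ∨ ({a2, a3} : Finset ℕ) ⊆ F ∨ ({a3, a4} : Finset ℕ) ⊆ F)

/-- Binomial coefficient `C(a,b)` for integers, `0` if `b < 0` or `b > a`. -/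
def ch (a b : ℤ) : ℤ := if 0 ≤ b ∧ b ≤ a then (Nat.choose a.toNat b.toNat : ℤ) else 0

/-- `g(m,x,y,t) = m·C(n−t−1,x−t−1) + y(t+1)(y−t+1)·C(n−t−2,x−t−2)`. -/
def gfun (n m x y t : ℤ) : ℤ :=
  m * ch (n - t - 1) (x - t - 1) + y * (t + 1) * (y - t + 1) * ch (n - t - 2) (x - t - 2)

/-- `a(x,t) = (t+2)·C(n−t−2,x−t−1) + C(n−t−2,x−t−2)`. -/
def afun (n x t : ℤ) : ℤ := (t + 2) * ch (n - t - 2) (x - t - 1) + ch (n - t - 2) (x - t - 2)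

/-- `c₁(y,t) = C(n−t−1,y−t−1) + t + 1`. -/
def c1fun (n y t : ℤ) : ℤ := ch (n - t - 1) (y - t - 1) + t + 1

/-- `c₂(x,y,t) = (t+1)(C(n−t−1,x−t) − C(n−y−1,x−t)) + C(n−t−1,x−t−1)`. -/
def c2fun (n x y t : ℤ) : ℤ :=
  (t + 1) * (ch (n - t - 1) (x - t) - ch (n - y - 1) (x - t)) + ch (n - t - 1) (x - t - 1)

/-- `h(x,y,t) = C(n−t,x−t) − C(n−y−1,x−t) + t`. -/
def hfun (n x y t : ℤ) : ℤ := ch (n - t) (x - t) - ch (n - y - 1) (x - t) + t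

section AuxPerm
open Finset

lemma fix_outside_image {σ : Equiv.Perm ℕ} {U W : Finset ℕ}
    (hfix : ∀ x ∉ U, σ x = x) (hW : ∀ x ∈ W, x ∉ U) : W.image σ = W := by
  have : ∀ x ∈ W, σ x = id x := fun x hx => hfix x (hW x hx)
  rw [Finset.image_congr this, Finset.image_id]

lemma fix_outside_mapsto {σ : Equiv.Perm ℕ} {U S : Finset ℕ}
    (hfix : ∀ x ∉ U, σ x = x) (hUS : U ⊆ S) : ∀ x ∈ S, σ x ∈ S := by
  intro x hx
  by_cases h : σ x ∈ U
  · exact hUS h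
  · have h1 : σ (σ x) = σ x := hfix _ h
    have h2 : σ x = x := σ.injective h1
    rw [h2]; exact hx

lemma image_eq_of_mapsto {σ : Equiv.Perm ℕ} {S : Finset ℕ}
    (h : ∀ x ∈ S, σ x ∈ S) : S.image σ = S := by
  apply Finset.eq_of_subset_of_card_le
  · intro y hy
    obtain ⟨x, hx, rfl⟩ := Finset.mem_image.1 hy
    exact h x hx
  · rw [Finset.card_image_of_injective _ σ.injective]

lemma swap_image_insert {a b : ℕ} {A : Finset ℕ} (ha : a ∈ A) (hb : b ∉ A) :
    A.image (Equiv.swap a b) = insert b (A.erase a) := by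
  have hA : A = insert a (A.erase a) := (Finset.insert_erase ha).symm
  conv_lhs => rw [hA]
  rw [Finset.image_insert, Equiv.swap_apply_left]
  congr 1
  have : ∀ x ∈ A.erase a, (Equiv.swap a b) x = id x := by
    intro x hx
    have hxa : x ≠ a := Finset.ne_of_mem_erase hx
    have hxb : x ≠ b := by
      intro h; subst h; exact hb (Finset.mem_of_mem_erase hx)
    simp [Equiv.swap_apply_of_ne_of_ne hxa hxb]
  rw [Finset.image_congr this, Finset.image_id]

lemma exists_perm_map_aux : ∀ (m : ℕ) (A B : Finset ℕ), (A \ B).card ≤ m → A.card = B.card →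
    ∃ σ : Equiv.Perm ℕ, A.image σ = B ∧ ∀ x ∉ A ∪ B, σ x = x := by
  intro m
  induction m with
  | zero =>
    intro A B hm hc
    have hAB : A ⊆ B := by
      rw [← Finset.sdiff_eq_empty_iff_subset]
      exact Finset.card_eq_zero.1 (Nat.le_zero.1 hm)
    have : A = B := Finset.eq_of_subset_of_card_le hAB (le_of_eq hc.symm)
    subst this
    exact ⟨1, by simp, fun x _ => rfl⟩
  | succ m ih =>
    intro A B hm hc
    by_cases hAB : A ⊆ B
    · have : A = B := Finset.eq_of_subset_of_card_le hAB (le_of_eq hc.symm)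
      subst this
      exact ⟨1, by simp, fun x _ => rfl⟩
    · obtain ⟨a, haA, haB⟩ := Finset.not_subset.1 hAB
      have hBA : ¬ B ⊆ A := by
        intro h
        have hBA' : B = A := Finset.eq_of_subset_of_card_le h (le_of_eq hc)
        exact hAB (fun x hx => by rwa [hBA'])
      obtain ⟨b, hbB, hbA⟩ := Finset.not_subset.1 hBA
      set A' := insert b (A.erase a) with hA'
      have hbea : b ∉ A.erase a := fun h => hbA (Finset.mem_of_mem_erase h)
      have hcA' : A'.card = B.card := by
        rw [hA', Finset.card_insert_of_notMem hbea, Finset.card_erase_of_mem haA, ← hc]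
        have : 1 ≤ A.card := Finset.card_pos.2 ⟨a, haA⟩
        omega
      have hsd : A' \ B = (A \ B).erase a := by
        ext x
        simp only [hA', Finset.mem_sdiff, Finset.mem_insert, Finset.mem_erase]
        constructor
        · rintro ⟨h1 | h1, h2⟩
          · exact absurd (h1 ▸ hbB) h2
          · exact ⟨h1.1, h1.2, h2⟩
        · rintro ⟨h1, h2, h3⟩
          exact ⟨Or.inr ⟨h1, h2⟩, h3⟩
      have hmem : a ∈ A \ B := Finset.mem_sdiff.2 ⟨haA, haB⟩
      have hm' : (A' \ B).card ≤ m := by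
        rw [hsd, Finset.card_erase_of_mem hmem]
        omega
      obtain ⟨σ', h1, h2⟩ := ih A' B hm' hcA'
      refine ⟨σ' * Equiv.swap a b, ?_, ?_⟩
      · have : A.image ⇑(σ' * Equiv.swap a b) = (A.image (Equiv.swap a b)).image σ' := by
          rw [Finset.image_image]; rfl
        rw [this, swap_image_insert haA hbA, ← hA', h1]
      · intro x hx
        have hxA : x ∉ A := fun h => hx (Finset.mem_union_left _ h)
        have hxB : x ∉ B := fun h => hx (Finset.mem_union_right _ h)
        have hxa : x ≠ a := fun h => hxA (h ▸ haA)
        have hxb : x ≠ b := fun h => hxB (h ▸ hbB)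
        have hswap : (Equiv.swap a b) x = x := Equiv.swap_apply_of_ne_of_ne hxa hxb
        have hx' : x ∉ A' ∪ B := by
          simp only [hA', Finset.mem_union, Finset.mem_insert, Finset.mem_erase]
          push_neg
          exact ⟨⟨hxb, fun _ => hxA⟩, hxB⟩
        show σ' ((Equiv.swap a b) x) = x
        rw [hswap]
        exact h2 x hx'

lemma exists_perm_map (A B : Finset ℕ) (h : A.card = B.card) :
    ∃ σ : Equiv.Perm ℕ, A.image σ = B ∧ ∀ x ∉ A ∪ B, σ x = x :=
  exists_perm_map_aux (A \ B).card A B le_rfl h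


lemma image_mul (σ τ : Equiv.Perm ℕ) (W : Finset ℕ) :
    W.image ⇑(σ * τ) = (W.image τ).image σ := by
  rw [Finset.image_image]; rfl

lemma exists_perm_pair (S T D T₀ D₀ : Finset ℕ)
    (hTS : T ⊆ S) (hDS : D ⊆ S) (hT₀S : T₀ ⊆ S) (hD₀S : D₀ ⊆ S)
    (hTD : ∀ x ∈ T, x ∉ D) (hTD₀ : ∀ x ∈ T₀, x ∉ D₀)
    (hcT : T.card = T₀.card) (hcD : D.card = D₀.card)
    (hspace : (T ∪ D ∪ T₀ ∪ D₀).card + T.card + D.card ≤ S.card) :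
    ∃ σ : Equiv.Perm ℕ, T.image σ = T₀ ∧ D.image σ = D₀ ∧ (∀ x ∈ S, σ x ∈ S) ∧ S.image σ = S := by
  classical
  set U := T ∪ D ∪ T₀ ∪ D₀ with hU
  have hUS : U ⊆ S := by
    intro x hx
    simp only [hU, Finset.mem_union] at hx
    rcases hx with ((h | h) | h) | h
    exacts [hTS h, hDS h, hT₀S h, hD₀S h]
  have hR : T.card + D.card ≤ (S \ U).card := by
    rw [Finset.card_sdiff_of_subset hUS]; omega
  obtain ⟨Z, hZR, hZc⟩ := Finset.exists_subset_card_eq hR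
  obtain ⟨ZT, hZTZ, hZTc⟩ := Finset.exists_subset_card_eq (show T.card ≤ Z.card by omega)
  set ZD := Z \ ZT with hZD
  have hZDc : ZD.card = D.card := by
    rw [hZD, Finset.card_sdiff_of_subset hZTZ]; omega
  have hZS : Z ⊆ S := hZR.trans (Finset.sdiff_subset)
  have hZU : ∀ x ∈ Z, x ∉ U := fun x hx => (Finset.mem_sdiff.1 (hZR hx)).2
  have hZTS : ZT ⊆ S := hZTZ.trans hZS
  have hZDS : ZD ⊆ S := (Finset.sdiff_subset).trans hZS
  obtain ⟨σ1, hσ1, hf1⟩ := exists_perm_map T ZT hZTc.symm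
  obtain ⟨σ2, hσ2, hf2⟩ := exists_perm_map D ZD (hZDc.symm)
  obtain ⟨σ3, hσ3, hf3⟩ := exists_perm_map ZT T₀ (hZTc.trans hcT)
  obtain ⟨σ4, hσ4, hf4⟩ := exists_perm_map ZD D₀ (hZDc.trans hcD)
  have hTU : ∀ x ∈ T, x ∈ U := fun x hx => by
    simp only [hU, Finset.mem_union]; tauto
  have hDU : ∀ x ∈ D, x ∈ U := fun x hx => by
    simp only [hU, Finset.mem_union]; tauto
  have hT₀U : ∀ x ∈ T₀, x ∈ U := fun x hx => by
    simp only [hU, Finset.mem_union]; tauto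
  have hD₀U : ∀ x ∈ D₀, x ∈ U := fun x hx => by
    simp only [hU, Finset.mem_union]; tauto
  refine ⟨σ4 * σ3 * σ2 * σ1, ?_, ?_, ?_, ?_⟩
  · rw [_root_.image_mul, _root_.image_mul, _root_.image_mul, hσ1]
    have h2 : ZT.image σ2 = ZT := by
      apply fix_outside_image hf2
      intro x hx
      have hxZ : x ∈ Z := hZTZ hx
      simp only [Finset.mem_union]
      push_neg
      exact ⟨fun h => (hZU x hxZ) (hDU x h), fun h => (Finset.mem_sdiff.1 h).2 hx⟩
    rw [h2, hσ3]
    apply fix_outside_image hf4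
    intro x hx
    simp only [Finset.mem_union]
    push_neg
    constructor
    · intro h
      exact (hZU x ((Finset.sdiff_subset) h)) (hT₀U x hx)
    · exact hTD₀ x hx
  · rw [_root_.image_mul, _root_.image_mul, _root_.image_mul]
    have h1 : D.image σ1 = D := by
      apply fix_outside_image hf1
      intro x hx
      simp only [Finset.mem_union]
      push_neg
      exact ⟨fun h => hTD x h hx, fun h => (hZU x (hZTZ h)) (hDU x hx)⟩
    rw [h1, hσ2]
    have h3 : ZD.image σ3 = ZD := by
      apply fix_outside_image hf3
      intro x hx
      simp only [Finset.mem_union]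
      push_neg
      exact ⟨(Finset.mem_sdiff.1 hx).2, fun h => (hZU x ((Finset.sdiff_subset) hx)) (hT₀U x h)⟩
    rw [h3, hσ4]
  · intro x hx
    have m1 := fix_outside_mapsto hf1 (Finset.union_subset hTS hZTS)
    have m2 := fix_outside_mapsto hf2 (Finset.union_subset hDS hZDS)
    have m3 := fix_outside_mapsto hf3 (Finset.union_subset hZTS hT₀S)
    have m4 := fix_outside_mapsto hf4 (Finset.union_subset hZDS hD₀S)
    exact m4 _ (m3 _ (m2 _ (m1 _ hx)))
  · apply image_eq_of_mapsto
    intro x hx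
    have m1 := fix_outside_mapsto hf1 (Finset.union_subset hTS hZTS)
    have m2 := fix_outside_mapsto hf2 (Finset.union_subset hDS hZDS)
    have m3 := fix_outside_mapsto hf3 (Finset.union_subset hZTS hT₀S)
    have m4 := fix_outside_mapsto hf4 (Finset.union_subset hZDS hD₀S)
    exact m4 _ (m3 _ (m2 _ (m1 _ hx)))

end AuxPerm

lemma mem_ksubsets {S A : Finset ℕ} {k : ℕ} : A ∈ ksubsets S k ↔ A ⊆ S ∧ A.card = k := by
  simp [ksubsets]

lemma mem_covers {n t : ℕ} {F : Finset (Finset ℕ)} {T : Finset ℕ} :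
    T ∈ covers n t F ↔ T ⊆ Finset.Icc 1 n ∧ T.card = t + 1 ∧ ∀ A ∈ F, t ≤ (T ∩ A).card := by
  simp [covers, and_assoc]

/-- Lemma 2.6(ii). -/
theorem single_cover_contained
    (n k l t : ℕ) (hn0 : 0 < n) (ht0 : 0 < t) (hk : t + 1 ≤ k) (hl : t + 1 ≤ l)
    (hn : (t+1)^2 * (k+l)^2 * (k - t + 1) * (l - t + 1) + k + l - t ≤ n)
    (F G : Finset (Finset ℕ))
    (hmax : maximalCrossIn (Iv 1 n) k l t F G)
    (htF : tau n t F = t + 1) (htG : tau n t G = t + 1)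
    (hTg : ¬ crossInt t (covers n t G) (covers n t G))
    (hTf : (covers n t F).card = 1)
    (hsub : covers n t F ⊆ covers n t G) :
    (covers n t G).card ≤ (t + 1) * (l - t) + 1 ∧
    (2 ≤ t → (covers n t G).card = (t + 1) * (l - t) + 1 →
      isoPair n F G (famC2 n k t l) (famC1 n l t)) := by
  classical
  obtain ⟨hFk, hGl, hcross, hmaxP⟩ := hmax
  -- arithmetic
  have hbig : k + 3*l + 3*t + 6 ≤ n := by
    obtain ⟨a, ha⟩ := Nat.exists_eq_add_of_le hk
    obtain ⟨b, hb⟩ := Nat.exists_eq_add_of_le hl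
    have e1 : k - t + 1 = a + 2 := by omega
    have e2 : l - t + 1 = b + 2 := by omega
    rw [e1, e2] at hn
    have hP4 : 4*(k+l) ≤ (k+l)*(k+l) := Nat.mul_le_mul_right _ (by omega)
    have hPX : 1 * ((k+l)*(k+l)) * 1 * 1 ≤ (t+1)^2 * (k+l)^2 * (a+2) * (b+2) := by
      have : (k+l)^2 = (k+l)*(k+l) := sq (k+l) ▸ by ring
      rw [this]
      apply Nat.mul_le_mul (Nat.mul_le_mul (Nat.mul_le_mul ?_ le_rfl) ?_) ?_ <;> [skip; omega; omega]
      · have : 1 ≤ (t+1)^2 := Nat.one_le_pow _ _ (by omega)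
        omega
    rw [one_mul, mul_one, mul_one] at hPX
    set X := (t+1)^2 * (k+l)^2 * (a+2) * (b+2) with hX
    set P := (k+l)*(k+l) with hP
    omega
  -- the unique cover T of F
  obtain ⟨T, hTeq⟩ := Finset.card_eq_one.1 hTf
  have hTmemF : T ∈ covers n t F := by rw [hTeq]; exact Finset.mem_singleton_self T
  have hTmemG : T ∈ covers n t G := hsub hTmemF
  obtain ⟨hTsub, hTcard, hTcovF⟩ := mem_covers.1 hTmemF
  have hTcovG : ∀ B ∈ G, t ≤ (T ∩ B).card := (mem_covers.1 hTmemG).2.2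
  -- maximality consequences
  have Fmax : ∀ A : Finset ℕ, A ⊆ Finset.Icc 1 n → A.card = k →
      (∀ B ∈ G, t ≤ (A ∩ B).card) → A ∈ F := by
    intro A hA1 hA2 hA3
    have hF' : insert A F ⊆ ksubsets (Iv 1 n) k := by
      intro X hX
      rcases Finset.mem_insert.1 hX with rfl | hX
      · exact mem_ksubsets.2 ⟨hA1, hA2⟩
      · exact hFk hX
    have hcross' : crossInt t (insert A F) G := by
      intro X hX B hB
      rcases Finset.mem_insert.1 hX with rfl | hX
      · exact hA3 B hB
      · exact hcross X hX B hB
    have := (hmaxP (insert A F) G hF' hGl hcross' (Finset.subset_insert A F)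
      (Finset.Subset.refl G)).1
    rw [this]; exact Finset.mem_insert_self A F
  have Gmax : ∀ B : Finset ℕ, B ⊆ Finset.Icc 1 n → B.card = l →
      (∀ A ∈ F, t ≤ (A ∩ B).card) → B ∈ G := by
    intro B hB1 hB2 hB3
    have hG' : insert B G ⊆ ksubsets (Iv 1 n) l := by
      intro X hX
      rcases Finset.mem_insert.1 hX with rfl | hX
      · exact mem_ksubsets.2 ⟨hB1, hB2⟩
      · exact hGl hX
    have hcross' : crossInt t F (insert B G) := by
      intro A hA X hX
      rcases Finset.mem_insert.1 hX with rfl | hX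
      · exact hB3 A hA
      · exact hcross A hA X hX
    have := (hmaxP F (insert B G) hFk hG' hcross' (Finset.Subset.refl F)
      (Finset.subset_insert B G)).2
    rw [this]; exact Finset.mem_insert_self B G
  -- no t-cover of size t for G
  have no_small_G : ∀ W : Finset ℕ, W ⊆ Finset.Icc 1 n → W.card = t →
      ∃ B ∈ G, (W ∩ B).card < t := by
    intro W hW1 hW2
    by_contra hcon
    push_neg at hcon
    have : tau n t G ≤ t := Nat.sInf_le ⟨W, hW1, hW2, hcon⟩
    omega
  -- extension lemma
  have ext_lemma : ∀ T' : Finset ℕ, T' ⊆ Finset.Icc 1 n → T'.card = t + 1 →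
      ∃ A : Finset ℕ, A ⊆ Finset.Icc 1 n ∧ A.card = k ∧ T' ⊆ A ∧
        ∀ x ∈ A, x ∈ T' ∨ x ∉ T := by
    intro T' hT'1 hT'2
    have hCcard : k - (t+1) ≤ (Finset.Icc 1 n \ (T' ∪ T)).card := by
      have h1 : (Finset.Icc 1 n \ (T' ∪ T)).card
          = n - (T' ∪ T).card := by
        rw [Finset.card_sdiff_of_subset (Finset.union_subset hT'1 hTsub), Nat.card_Icc]
        omega
      have h2 : (T' ∪ T).card ≤ 2*t + 2 := by
        calc (T' ∪ T).card ≤ T'.card + T.card := Finset.card_union_le _ _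
        _ = 2*t+2 := by omega
      omega
    obtain ⟨A0, hA0sub, hA0card⟩ := Finset.exists_subset_card_eq hCcard
    refine ⟨T' ∪ A0, ?_, ?_, Finset.subset_union_left, ?_⟩
    · exact Finset.union_subset hT'1 (hA0sub.trans (Finset.sdiff_subset))
    · rw [Finset.card_union_of_disjoint, hT'2, hA0card]
      · omega
      · refine Finset.disjoint_left.2 (fun x hx1 hx2 => ?_)
        have := hA0sub hx2
        rw [Finset.mem_sdiff] at this
        exact this.2 (Finset.mem_union_left _ hx1)
    · intro x hx
      rcases Finset.mem_union.1 hx with h | h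
      · exact Or.inl h
      · have := hA0sub h
        rw [Finset.mem_sdiff] at this
        exact Or.inr (fun hxT => this.2 (Finset.mem_union_right _ hxT))
  -- every (t+1)-cover of G meets T in at least t elements
  have key1 : ∀ T' ∈ covers n t G, t ≤ (T' ∩ T).card := by
    intro T' hT'
    obtain ⟨hT'1, hT'2, hT'3⟩ := mem_covers.1 hT'
    obtain ⟨A, hA1, hA2, hA3, hA4⟩ := ext_lemma T' hT'1 hT'2
    have hAF : A ∈ F := by
      apply Fmax A hA1 hA2
      intro B hB
      calc t ≤ (T' ∩ B).card := hT'3 B hB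
      _ ≤ (A ∩ B).card := Finset.card_le_card
          (Finset.inter_subset_inter hA3 (Finset.Subset.refl B))
    have h1 : t ≤ (T ∩ A).card := hTcovF A hAF
    have h2 : T ∩ A ⊆ T ∩ T' := by
      intro x hx
      rw [Finset.mem_inter] at hx ⊢
      rcases hA4 x hx.2 with h | h
      · exact ⟨hx.1, h⟩
      · exact absurd hx.1 h
    rw [Finset.inter_comm]
    exact h1.trans (Finset.card_le_card h2)
  -- choose the witnesses B x
  have hex : ∀ x : ℕ, ∃ Bx : Finset ℕ, x ∈ T → Bx ∈ G ∧ (T.erase x ∩ Bx).card < t := by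
    intro x
    by_cases hx : x ∈ T
    · obtain ⟨Bx, hBx1, hBx2⟩ := no_small_G (T.erase x)
        ((Finset.erase_subset _ _).trans hTsub)
        (by rw [Finset.card_erase_of_mem hx, hTcard]; omega)
      exact ⟨Bx, fun _ => ⟨hBx1, hBx2⟩⟩
    · exact ⟨∅, fun h => absurd h hx⟩
  choose B hB using hex
  have hBfacts : ∀ x ∈ T, B x ∈ G ∧ x ∈ B x ∧ (T ∩ B x).card = t ∧
      (T.erase x ∩ B x).card = t - 1 ∧ (B x \ T).card = l - t ∧ B x ⊆ Finset.Icc 1 n := by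
    intro x hx
    obtain ⟨hBG, hBlt⟩ := hB x hx
    obtain ⟨hBS, hBcard⟩ := mem_ksubsets.1 (hGl hBG)
    have hle : t ≤ (T ∩ B x).card := hTcovG (B x) hBG
    have hxB : x ∈ B x := by
      by_contra hxB
      have hss : T ∩ B x ⊆ T.erase x ∩ B x := by
        intro y hy
        rw [Finset.mem_inter] at hy
        rw [Finset.mem_inter, Finset.mem_erase]
        exact ⟨⟨fun h => hxB (h ▸ hy.2), hy.1⟩, hy.2⟩
      have := Finset.card_le_card hss
      omega
    have hsplit : T ∩ B x ⊆ insert x (T.erase x ∩ B x) := by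
      intro y hy
      rw [Finset.mem_inter] at hy
      rw [Finset.mem_insert, Finset.mem_inter, Finset.mem_erase]
      by_cases hyx : y = x
      · exact Or.inl hyx
      · exact Or.inr ⟨⟨hyx, hy.1⟩, hy.2⟩
    have hc1 : (T ∩ B x).card ≤ t := by
      have := (Finset.card_le_card hsplit).trans (Finset.card_insert_le _ _)
      omega
    have hTB : (T ∩ B x).card = t := le_antisymm hc1 hle
    have heq : T.erase x ∩ B x = (T ∩ B x).erase x := by
      ext y
      simp only [Finset.mem_inter, Finset.mem_erase]
      tauto
    have hc2 : (T.erase x ∩ B x).card = t - 1 := by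
      rw [heq, Finset.card_erase_of_mem (Finset.mem_inter.2 ⟨hx, hxB⟩), hTB]
    have hc3 : (B x \ T).card = l - t := by
      have := Finset.card_sdiff_add_card_inter (B x) T
      rw [Finset.inter_comm] at hTB
      omega
    exact ⟨hBG, hxB, hTB, hc2, hc3, hBS⟩
  -- structure of covers of G
  have cover_struct : covers n t G ⊆ insert T (T.biUnion
      (fun x => (B x \ T).image (fun y => insert y (T.erase x)))) := by
    intro T' hT'
    obtain ⟨hT'1, hT'2, hT'3⟩ := mem_covers.1 hT'
    by_cases hTT' : T' = T
    · rw [hTT']; exact Finset.mem_insert_self _ _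
    · have hkey : t ≤ (T' ∩ T).card := key1 T' hT'
      have hnsub : ¬ T ⊆ T' := by
        intro h
        exact hTT' (Finset.eq_of_subset_of_card_le h (by omega)).symm
      obtain ⟨x, hxT, hxT'⟩ := Finset.not_subset.1 hnsub
      have hTT'e : T ∩ T' = T.erase x := by
        apply Finset.eq_of_subset_of_card_le
        · intro y hy
          rw [Finset.mem_inter] at hy
          rw [Finset.mem_erase]
          exact ⟨fun h => hxT' (h ▸ hy.2), hy.1⟩
        · rw [Finset.card_erase_of_mem hxT, hTcard, Finset.inter_comm]
          omega
      have hint : (T' ∩ T).card = t := by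
        have h1 : (T' ∩ T).card ≤ t := by
          rw [Finset.inter_comm, hTT'e, Finset.card_erase_of_mem hxT, hTcard]; omega
        omega
      have hsd1 : (T' \ T).card = 1 := by
        have := Finset.card_sdiff_add_card_inter T' T
        omega
      obtain ⟨y, hy⟩ := Finset.card_eq_one.1 hsd1
      have hyT' : y ∈ T' := by
        have : y ∈ T' \ T := hy ▸ Finset.mem_singleton_self y
        exact (Finset.mem_sdiff.1 this).1
      have hyT : y ∉ T := by
        have : y ∈ T' \ T := hy ▸ Finset.mem_singleton_self y
        exact (Finset.mem_sdiff.1 this).2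
      have hT'eq : T' = insert y (T.erase x) := by
        ext z
        rw [Finset.mem_insert, ← hTT'e]
        constructor
        · intro hz
          by_cases hzT : z ∈ T
          · exact Or.inr (Finset.mem_inter.2 ⟨hzT, hz⟩)
          · have : z ∈ T' \ T := Finset.mem_sdiff.2 ⟨hz, hzT⟩
            rw [hy, Finset.mem_singleton] at this
            exact Or.inl this
        · rintro (rfl | hz)
          · exact hyT'
          · exact (Finset.mem_inter.1 hz).2
      obtain ⟨hBG, hxB, hTB, hc2, hc3, hBS⟩ := hBfacts x hxT
      have hyB : y ∈ B x := by
        by_contra hyB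
        have hss : T' ∩ B x ⊆ T.erase x ∩ B x := by
          intro z hz
          rw [Finset.mem_inter] at hz
          have := hz.1
          rw [hT'eq, Finset.mem_insert] at this
          rcases this with rfl | h
          · exact absurd hz.2 hyB
          · exact Finset.mem_inter.2 ⟨h, hz.2⟩
        have h1 := (Finset.card_le_card hss).trans (le_of_eq hc2)
        have h2 := hT'3 (B x) hBG
        omega
      refine Finset.mem_insert.2 (Or.inr (Finset.mem_biUnion.2 ⟨x, hxT, ?_⟩))
      exact Finset.mem_image.2 ⟨y, Finset.mem_sdiff.2 ⟨hyB, hyT⟩, hT'eq.symm⟩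
  -- the cardinality bound
  have hUcard : (insert T (T.biUnion
      (fun x => (B x \ T).image (fun y => insert y (T.erase x))))).card
      ≤ (t+1)*(l-t) + 1 := by
    calc (insert T (T.biUnion
          (fun x => (B x \ T).image (fun y => insert y (T.erase x))))).card
        ≤ (T.biUnion (fun x => (B x \ T).image (fun y => insert y (T.erase x)))).card + 1 :=
          Finset.card_insert_le _ _
      _ ≤ (∑ x ∈ T, ((B x \ T).image (fun y => insert y (T.erase x))).card) + 1 := by
          have := Finset.card_biUnion_le (s := T)
            (t := fun x => (B x \ T).image (fun y => insert y (T.erase x)))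
          omega
      _ ≤ (∑ x ∈ T, (l - t)) + 1 := by
          have : ∀ x ∈ T, ((B x \ T).image (fun y => insert y (T.erase x))).card ≤ l - t := by
            intro x hx
            calc ((B x \ T).image (fun y => insert y (T.erase x))).card
                ≤ (B x \ T).card := Finset.card_image_le
              _ = l - t := (hBfacts x hx).2.2.2.2.1
          have := Finset.sum_le_sum this
          simp only [Finset.sum_const, smul_eq_mul] at this ⊢
          omega
      _ = (t+1)*(l-t) + 1 := by
          rw [Finset.sum_const, smul_eq_mul, hTcard]
  have card_bound : (covers n t G).card ≤ (t+1)*(l-t) + 1 :=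
    (Finset.card_le_card cover_struct).trans hUcard
  -- ===================== PART 2 =====================
  have part2 : ∀ (_ : 2 ≤ t) (_ : (covers n t G).card = (t+1)*(l-t)+1),
      isoPair n F G (famC2 n k t l) (famC1 n l t) := by
    intro ht2 hcard
    have hcoveq : covers n t G = insert T (T.biUnion
        (fun x => (B x \ T).image (fun y => insert y (T.erase x)))) :=
      Finset.eq_of_subset_of_card_le cover_struct (by omega)
    have cov_all : ∀ x ∈ T, ∀ y ∈ B x \ T, insert y (T.erase x) ∈ covers n t G := by
      intro x hx y hy
      rw [hcoveq]
      exact Finset.mem_insert.2 (Or.inr (Finset.mem_biUnion.2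
        ⟨x, hx, Finset.mem_image.2 ⟨y, hy, rfl⟩⟩))
    -- the missing element z x of B x within T
    have hzex : ∀ x : ℕ, ∃ zx : ℕ, x ∈ T → zx ∈ T ∧ zx ≠ x ∧ T ∩ B x = T.erase zx := by
      intro x
      by_cases hx : x ∈ T
      · obtain ⟨hBG, hxB, hTB, hc2, hc3, hBS⟩ := hBfacts x hx
        have hsd : (T \ B x).card = 1 := by
          have := Finset.card_sdiff_add_card_inter T (B x)
          omega
        obtain ⟨zx, hzx⟩ := Finset.card_eq_one.1 hsd
        have hz1 : zx ∈ T \ B x := hzx ▸ Finset.mem_singleton_self zx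
        refine ⟨zx, fun _ => ⟨(Finset.mem_sdiff.1 hz1).1, ?_, ?_⟩⟩
        · intro h
          exact (Finset.mem_sdiff.1 hz1).2 (h ▸ hxB)
        · ext y
          rw [Finset.mem_inter, Finset.mem_erase]
          constructor
          · intro ⟨h1, h2⟩
            refine ⟨fun h => ?_, h1⟩
            subst h
            exact (Finset.mem_sdiff.1 hz1).2 h2
          · intro ⟨h1, h2⟩
            refine ⟨h2, ?_⟩
            by_contra h3
            have : y ∈ T \ B x := Finset.mem_sdiff.2 ⟨h2, h3⟩
            rw [hzx, Finset.mem_singleton] at this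
            exact h1 this
      · exact ⟨0, fun h => absurd h hx⟩
    choose z hz using hzex
    -- erase-two cardinality helper
    have erase2 : ∀ x ∈ T, ∀ x' ∈ T, x ≠ x' → ((T.erase x) ∩ (T.erase x')).card = t - 1 := by
      intro x hx x' hx' hne
      have : (T.erase x) ∩ (T.erase x') = (T.erase x).erase x' := by
        ext y
        simp only [Finset.mem_inter, Finset.mem_erase]
        tauto
      rw [this, Finset.card_erase_of_mem (Finset.mem_erase.2 ⟨fun h => hne h.symm, hx'⟩),
        Finset.card_erase_of_mem hx, hTcard]
      omega
    -- all sets B x \ T coincide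
    have heq2 : ∀ x ∈ T, ∀ x' ∈ T, x ≠ z x' → B x \ T ⊆ B x' \ T := by
      intro x hx x' hx' hne y hy
      obtain ⟨hBG', hxB', hTB', hc2', hc3', hBS'⟩ := hBfacts x' hx'
      obtain ⟨hzT, hzne, hzeq⟩ := hz x' hx'
      have hcov := cov_all x hx y hy
      have hle : t ≤ (insert y (T.erase x) ∩ B x').card :=
        (mem_covers.1 hcov).2.2 (B x') hBG'
      have hyT : y ∉ T := (Finset.mem_sdiff.1 hy).2
      by_contra hyB'
      have hyBx' : y ∉ B x' := fun h => hyB' (Finset.mem_sdiff.2 ⟨h, hyT⟩)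
      have hss : insert y (T.erase x) ∩ B x' ⊆ (T.erase x) ∩ (T.erase (z x')) := by
        intro w hw
        rw [Finset.mem_inter, Finset.mem_insert] at hw
        rcases hw.1 with rfl | hw1
        · exact absurd hw.2 hyBx'
        · have : w ∈ T ∩ B x' := Finset.mem_inter.2 ⟨Finset.mem_of_mem_erase hw1, hw.2⟩
          rw [hzeq] at this
          exact Finset.mem_inter.2 ⟨hw1, this⟩
      have := Finset.card_le_card hss
      rw [erase2 x hx (z x') hzT hne] at this
      omega
    have hall : ∀ x ∈ T, ∀ x' ∈ T, B x \ T = B x' \ T := by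
      have heq3 : ∀ x ∈ T, ∀ x' ∈ T, x ≠ z x' → B x \ T = B x' \ T := by
        intro x hx x' hx' hne
        apply Finset.eq_of_subset_of_card_le (heq2 x hx x' hx' hne)
        rw [(hBfacts x hx).2.2.2.2.1, (hBfacts x' hx').2.2.2.2.1]
      intro x hx x' hx'
      by_cases hxx : x = x'
      · rw [hxx]
      · by_cases h1 : x ≠ z x'
        · exact heq3 x hx x' hx' h1
        · by_cases h2 : x' ≠ z x
          · exact (heq3 x' hx' x hx h2).symm
          · push_neg at h1 h2
            have hcd : t + 1 - 2 ≤ (T \ {x, x'}).card := by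
              have h3 := Finset.le_card_sdiff ({x, x'} : Finset ℕ) T
              have h4 : ({x, x'} : Finset ℕ).card ≤ 2 :=
                (Finset.card_insert_le _ _).trans (by simp)
              omega
            have : (T \ {x, x'}).Nonempty := Finset.card_pos.1 (by omega)
            obtain ⟨x'', hx''⟩ := this
            rw [Finset.mem_sdiff, Finset.mem_insert, Finset.mem_singleton] at hx''
            push_neg at hx''
            obtain ⟨hx''T, hne1, hne2⟩ := hx''
            have e1 : B x'' \ T = B x \ T := heq3 x'' hx''T x hx (by rw [h2] at hne2; exact hne2)
            have e2 : B x'' \ T = B x' \ T := heq3 x'' hx''T x' hx' (by rw [h1] at hne1; exact hne1)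
            rw [← e1, e2]
    -- the common outside set D
    have hTne : T.Nonempty := Finset.card_pos.1 (by omega)
    obtain ⟨x₀, hx₀⟩ := hTne
    set D := B x₀ \ T with hDdef
    have hDeq : ∀ x ∈ T, B x \ T = D := fun x hx => hall x hx x₀ hx₀
    have hDcard : D.card = l - t := (hBfacts x₀ hx₀).2.2.2.2.1
    have hDS : D ⊆ Finset.Icc 1 n :=
      (Finset.sdiff_subset).trans (hBfacts x₀ hx₀).2.2.2.2.2
    have hDT : ∀ y ∈ D, y ∉ T := fun y hy => (Finset.mem_sdiff.1 hy).2
    have cov_all' : ∀ x ∈ T, ∀ y ∈ D, insert y (T.erase x) ∈ covers n t G := by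
      intro x hx y hy
      exact cov_all x hx y (by rw [hDeq x hx]; exact hy)
    have hBeq : ∀ x ∈ T, B x = T.erase (z x) ∪ D := by
      intro x hx
      obtain ⟨hzT, hzne, hzeq⟩ := hz x hx
      ext w
      rw [Finset.mem_union]
      constructor
      · intro hw
        by_cases hwT : w ∈ T
        · have : w ∈ T ∩ B x := Finset.mem_inter.2 ⟨hwT, hw⟩
          rw [hzeq] at this
          exact Or.inl this
        · exact Or.inr (by rw [← hDeq x hx]; exact Finset.mem_sdiff.2 ⟨hw, hwT⟩)
      · rintro (hw | hw)
        · have : w ∈ T ∩ B x := by rw [hzeq]; exact hw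
          exact (Finset.mem_inter.1 this).2
        · rw [← hDeq x hx] at hw
          exact (Finset.mem_sdiff.1 hw).1
    -- helper: an intersection with T of size t is T minus a point
    have inter_eq_erase : ∀ A : Finset ℕ, (T ∩ A).card = t →
        ∃ x ∈ T, x ∉ A ∧ T ∩ A = T.erase x := by
      intro A hA
      have hnsub : ¬ T ⊆ A := by
        intro h
        have : T ∩ A = T := Finset.inter_eq_left.2 h
        rw [this, hTcard] at hA
        omega
      obtain ⟨x, hxT, hxA⟩ := Finset.not_subset.1 hnsub
      refine ⟨x, hxT, hxA, Finset.eq_of_subset_of_card_le ?_ ?_⟩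
      · intro y hy
        rw [Finset.mem_inter] at hy
        exact Finset.mem_erase.2 ⟨fun h => hxA (h ▸ hy.2), hy.1⟩
      · rw [Finset.card_erase_of_mem hxT, hTcard, hA]
        omega
    -- structure of G (upper)
    have Gsub : ∀ Bb ∈ G, T ⊆ Bb ∨ ∃ x ∈ T, Bb = T.erase x ∪ D := by
      intro Bb hBb
      by_cases hTB : T ⊆ Bb
      · exact Or.inl hTB
      · obtain ⟨hBbS, hBbc⟩ := mem_ksubsets.1 (hGl hBb)
        have hle : t ≤ (T ∩ Bb).card := hTcovG Bb hBb
        have hcc : (T ∩ Bb).card = t := by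
          obtain ⟨x, hxT, hxB⟩ := Finset.not_subset.1 hTB
          have hss : T ∩ Bb ⊆ T.erase x := by
            intro y hy
            rw [Finset.mem_inter] at hy
            exact Finset.mem_erase.2 ⟨fun h => hxB (h ▸ hy.2), hy.1⟩
          have := Finset.card_le_card hss
          rw [Finset.card_erase_of_mem hxT, hTcard] at this
          omega
        obtain ⟨x, hxT, hxB, hxe⟩ := inter_eq_erase Bb hcc
        have hDB : D ⊆ Bb := by
          intro y hyD
          have hT2 : (T.erase x).Nonempty := by
            rw [← Finset.card_pos, Finset.card_erase_of_mem hxT, hTcard]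
            omega
          obtain ⟨x', hx'⟩ := hT2
          have hx'T : x' ∈ T := Finset.mem_of_mem_erase hx'
          have hx'ne : x' ≠ x := Finset.ne_of_mem_erase hx'
          have hcov := cov_all' x' hx'T y hyD
          have hle2 : t ≤ (insert y (T.erase x') ∩ Bb).card :=
            (mem_covers.1 hcov).2.2 Bb hBb
          by_contra hyB
          have hss : insert y (T.erase x') ∩ Bb ⊆ (T.erase x') ∩ (T.erase x) := by
            intro w hw
            rw [Finset.mem_inter, Finset.mem_insert] at hw
            rcases hw.1 with rfl | hw1
            · exact absurd hw.2 hyB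
            · have : w ∈ T ∩ Bb := Finset.mem_inter.2 ⟨Finset.mem_of_mem_erase hw1, hw.2⟩
              rw [hxe] at this
              exact Finset.mem_inter.2 ⟨hw1, this⟩
          have := Finset.card_le_card hss
          rw [erase2 x' hx'T x hxT hx'ne] at this
          omega
        refine Or.inr ⟨x, hxT, ?_⟩
        have hsub2 : T.erase x ∪ D ⊆ Bb := by
          apply Finset.union_subset _ hDB
          rw [← hxe]
          exact Finset.inter_subset_right
        have hcard2 : (T.erase x ∪ D).card = l := by
          rw [Finset.card_union_of_disjoint, Finset.card_erase_of_mem hxT, hTcard, hDcard]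
          · omega
          · exact Finset.disjoint_left.2 (fun w hw1 hw2 => hDT w hw2 (Finset.mem_of_mem_erase hw1))
        exact (Finset.eq_of_subset_of_card_le hsub2 (by omega)).symm
    -- structure of F (upper)
    have Fsub : ∀ A ∈ F, T ⊆ A ∨ ((T ∩ A).card = t ∧ ∃ y ∈ D, y ∈ A) := by
      intro A hA
      by_cases hTA : T ⊆ A
      · exact Or.inl hTA
      · have hle : t ≤ (T ∩ A).card := hTcovF A hA
        have hcc : (T ∩ A).card = t := by
          obtain ⟨x, hxT, hxA⟩ := Finset.not_subset.1 hTA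
          have hss : T ∩ A ⊆ T.erase x := by
            intro y hy
            rw [Finset.mem_inter] at hy
            exact Finset.mem_erase.2 ⟨fun h => hxA (h ▸ hy.2), hy.1⟩
          have := Finset.card_le_card hss
          rw [Finset.card_erase_of_mem hxT, hTcard] at this
          omega
        obtain ⟨x, hxT, hxA, hxe⟩ := inter_eq_erase A hcc
        obtain ⟨hBG, hxB, hTB, hc2, hc3, hBS⟩ := hBfacts x hxT
        obtain ⟨hzT, hzne, hzeq⟩ := hz x hxT
        have hle2 : t ≤ (A ∩ B x).card := hcross A hA (B x) hBG
        refine Or.inr ⟨hcc, ?_⟩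
        by_contra hcon
        push_neg at hcon
        have hss : A ∩ B x ⊆ (T.erase x) ∩ (T.erase (z x)) := by
          intro w hw
          rw [Finset.mem_inter] at hw
          have hwB : w ∈ T.erase (z x) ∪ D := by rw [← hBeq x hxT]; exact hw.2
          rcases Finset.mem_union.1 hwB with hw1 | hw1
          · have : w ∈ T ∩ A := Finset.mem_inter.2 ⟨Finset.mem_of_mem_erase hw1, hw.1⟩
            rw [hxe] at this
            exact Finset.mem_inter.2 ⟨this, hw1⟩
          · exact absurd hw.1 (hcon w hw1)
        have := Finset.card_le_card hss
        rw [erase2 x hxT (z x) hzT (fun h => hzne h.symm)] at this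
        omega
    -- erase-two lower bound helper
    have erase2' : ∀ x x' : ℕ, t - 1 ≤ ((T.erase x).erase x').card := by
      intro x x'
      have h1 : T.card - 1 ≤ (T.erase x).card := Finset.pred_card_le_card_erase
      have h2 : (T.erase x).card - 1 ≤ ((T.erase x).erase x').card := Finset.pred_card_le_card_erase
      omega
    -- G contains all the special sets
    have Gfull : ∀ x ∈ T, T.erase x ∪ D ∈ G := by
      intro x hx
      apply Gmax
      · exact Finset.union_subset ((Finset.erase_subset _ _).trans hTsub) hDS
      · rw [Finset.card_union_of_disjoint, Finset.card_erase_of_mem hx, hTcard, hDcard]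
        · omega
        · exact Finset.disjoint_left.2 (fun w hw1 hw2 => hDT w hw2 (Finset.mem_of_mem_erase hw1))
      · intro A hA
        rcases Fsub A hA with hTA | ⟨hcc, y, hyD, hyA⟩
        · have hss : T.erase x ⊆ A ∩ (T.erase x ∪ D) := by
            intro w hw
            exact Finset.mem_inter.2 ⟨hTA (Finset.mem_of_mem_erase hw),
              Finset.mem_union_left _ hw⟩
          have := Finset.card_le_card hss
          rw [Finset.card_erase_of_mem hx, hTcard] at this
          omega
        · obtain ⟨x', hx'T, hx'A, hxe⟩ := inter_eq_erase A hcc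
          have hss : insert y ((T.erase x).erase x') ⊆ A ∩ (T.erase x ∪ D) := by
            intro w hw
            rcases Finset.mem_insert.1 hw with rfl | hw1
            · exact Finset.mem_inter.2 ⟨hyA, Finset.mem_union_right _ hyD⟩
            · have hwTx : w ∈ T.erase x := Finset.mem_of_mem_erase hw1
              have hwA : w ∈ A := by
                have : w ∈ T ∩ A := by
                  rw [hxe]
                  exact Finset.mem_erase.2 ⟨(Finset.mem_erase.1 hw1).1,
                    Finset.mem_of_mem_erase hwTx⟩
                exact (Finset.mem_inter.1 this).2
              exact Finset.mem_inter.2 ⟨hwA, Finset.mem_union_left _ hwTx⟩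
          have h1 := Finset.card_le_card hss
          rw [Finset.card_insert_of_notMem
            (fun h => hDT y hyD (Finset.mem_of_mem_erase (Finset.mem_of_mem_erase h)))] at h1
          have h2 := erase2' x x'
          omega
    -- F contains all the special sets
    have Ffull : ∀ A : Finset ℕ, A ⊆ Finset.Icc 1 n → A.card = k →
        (T ⊆ A ∨ ((T ∩ A).card = t ∧ ∃ y ∈ D, y ∈ A)) → A ∈ F := by
      intro A hAS hAc hAcase
      apply Fmax A hAS hAc
      intro Bb hBb
      rcases hAcase with hTA | ⟨hcc, y, hyD, hyA⟩
      · rcases Gsub Bb hBb with hTB | ⟨x, hxT, rfl⟩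
        · have hss : T ⊆ A ∩ Bb := fun w hw => Finset.mem_inter.2 ⟨hTA hw, hTB hw⟩
          have := Finset.card_le_card hss
          omega
        · have hss : T.erase x ⊆ A ∩ (T.erase x ∪ D) := by
            intro w hw
            exact Finset.mem_inter.2 ⟨hTA (Finset.mem_of_mem_erase hw),
              Finset.mem_union_left _ hw⟩
          have := Finset.card_le_card hss
          rw [Finset.card_erase_of_mem hxT, hTcard] at this
          omega
      · obtain ⟨x', hx'T, hx'A, hxe⟩ := inter_eq_erase A hcc
        rcases Gsub Bb hBb with hTB | ⟨x, hxT, rfl⟩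
        · have hss : T.erase x' ⊆ A ∩ Bb := by
            intro w hw
            have hwA : w ∈ A := by
              have : w ∈ T ∩ A := hxe ▸ hw
              exact (Finset.mem_inter.1 this).2
            exact Finset.mem_inter.2 ⟨hwA, hTB (Finset.mem_of_mem_erase hw)⟩
          have := Finset.card_le_card hss
          rw [Finset.card_erase_of_mem hx'T, hTcard] at this
          omega
        · have hss : insert y ((T.erase x).erase x') ⊆ A ∩ (T.erase x ∪ D) := by
            intro w hw
            rcases Finset.mem_insert.1 hw with rfl | hw1
            · exact Finset.mem_inter.2 ⟨hyA, Finset.mem_union_right _ hyD⟩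
            · have hwTx : w ∈ T.erase x := Finset.mem_of_mem_erase hw1
              have hwA : w ∈ A := by
                have : w ∈ T ∩ A := by
                  rw [hxe]
                  exact Finset.mem_erase.2 ⟨(Finset.mem_erase.1 hw1).1,
                    Finset.mem_of_mem_erase hwTx⟩
                exact (Finset.mem_inter.1 this).2
              exact Finset.mem_inter.2 ⟨hwA, Finset.mem_union_left _ hwTx⟩
          have h1 := Finset.card_le_card hss
          rw [Finset.card_insert_of_notMem
            (fun h => hDT y hyD (Finset.mem_of_mem_erase (Finset.mem_of_mem_erase h)))] at h1
          have h2 := erase2' x x'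
          omega
    -- exact descriptions of G and F
    have GeqDef : G = (Finset.image (fun x => T.erase x ∪ D) T) ∪
        ((ksubsets (Finset.Icc 1 n) l).filter (fun Bb => T ⊆ Bb)) := by
      ext Bb
      constructor
      · intro hBb
        rcases Gsub Bb hBb with hTB | ⟨x, hxT, rfl⟩
        · exact Finset.mem_union_right _ (Finset.mem_filter.2 ⟨hGl hBb, hTB⟩)
        · exact Finset.mem_union_left _ (Finset.mem_image.2 ⟨x, hxT, rfl⟩)
      · intro hBb
        rcases Finset.mem_union.1 hBb with h | h
        · obtain ⟨x, hxT, rfl⟩ := Finset.mem_image.1 h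
          exact Gfull x hxT
        · obtain ⟨hks, hTB⟩ := Finset.mem_filter.1 h
          obtain ⟨hBS, hBc⟩ := mem_ksubsets.1 hks
          apply Gmax Bb hBS hBc
          intro A hA
          have hle : t ≤ (T ∩ A).card := hTcovF A hA
          have hss : T ∩ A ⊆ A ∩ Bb := fun w hw => by
            rw [Finset.mem_inter] at hw ⊢
            exact ⟨hw.2, hTB hw.1⟩
          exact hle.trans (Finset.card_le_card hss)
    have FeqDef : F = ((ksubsets (Finset.Icc 1 n) k).filter
          (fun A => (A ∩ T).card = t ∧ 1 ≤ (A ∩ D).card)) ∪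
        ((ksubsets (Finset.Icc 1 n) k).filter (fun A => T ⊆ A)) := by
      ext A
      constructor
      · intro hA
        rcases Fsub A hA with hTA | ⟨hcc, y, hyD, hyA⟩
        · exact Finset.mem_union_right _ (Finset.mem_filter.2 ⟨hFk hA, hTA⟩)
        · refine Finset.mem_union_left _ (Finset.mem_filter.2 ⟨hFk hA, ?_, ?_⟩)
          · rw [Finset.inter_comm]; exact hcc
          · exact Finset.card_pos.2 ⟨y, Finset.mem_inter.2 ⟨hyA, hyD⟩⟩
      · intro hA
        rcases Finset.mem_union.1 hA with h | h
        · obtain ⟨hks, hcc, hd⟩ := Finset.mem_filter.1 h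
          obtain ⟨hAS, hAc⟩ := mem_ksubsets.1 hks
          obtain ⟨y, hy⟩ := Finset.card_pos.1 hd
          rw [Finset.mem_inter] at hy
          exact Ffull A hAS hAc (Or.inr ⟨by rw [Finset.inter_comm]; exact hcc, y, hy.2, hy.1⟩)
        · obtain ⟨hks, hTA⟩ := Finset.mem_filter.1 h
          obtain ⟨hAS, hAc⟩ := mem_ksubsets.1 hks
          exact Ffull A hAS hAc (Or.inl hTA)
    -- the permutation
    set T₀ : Finset ℕ := Finset.Icc 1 (t+1) with hT₀def
    set D₀ : Finset ℕ := Finset.Icc (t+2) (l+1) with hD₀def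
    have hT₀c : T₀.card = t+1 := by rw [hT₀def, Nat.card_Icc]; omega
    have hD₀c : D₀.card = l - t := by rw [hD₀def, Nat.card_Icc]; omega
    have hT₀S : T₀ ⊆ Finset.Icc 1 n := by
      intro x hx
      rw [hT₀def, Finset.mem_Icc] at hx
      rw [Finset.mem_Icc]
      omega
    have hD₀S : D₀ ⊆ Finset.Icc 1 n := by
      intro x hx
      rw [hD₀def, Finset.mem_Icc] at hx
      rw [Finset.mem_Icc]
      omega
    have hT₀D₀ : ∀ x ∈ T₀, x ∉ D₀ := by
      intro x hx hx'
      rw [hT₀def, Finset.mem_Icc] at hx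
      rw [hD₀def, Finset.mem_Icc] at hx'
      omega
    have hT₀D₀union : T₀ ∪ D₀ = Finset.Icc 1 (l+1) := by
      ext x
      rw [Finset.mem_union, hT₀def, hD₀def, Finset.mem_Icc, Finset.mem_Icc, Finset.mem_Icc]
      omega
    have hspace : (T ∪ D ∪ T₀ ∪ D₀).card + T.card + D.card ≤ (Finset.Icc 1 n).card := by
      have h1 : (T ∪ D ∪ T₀ ∪ D₀).card ≤ T.card + D.card + T₀.card + D₀.card := by
        calc (T ∪ D ∪ T₀ ∪ D₀).card ≤ (T ∪ D ∪ T₀).card + D₀.card := Finset.card_union_le _ _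
          _ ≤ (T ∪ D).card + T₀.card + D₀.card := by
              have := Finset.card_union_le (T ∪ D) T₀
              omega
          _ ≤ T.card + D.card + T₀.card + D₀.card := by
              have := Finset.card_union_le T D
              omega
      rw [Nat.card_Icc]
      rw [hTcard, hDcard] at h1 ⊢
      rw [hT₀c, hD₀c] at h1
      omega
    obtain ⟨σ, himT, himD, hmapsto, hSfix⟩ := exists_perm_pair (Finset.Icc 1 n) T D T₀ D₀
      hTsub hDS hT₀S hD₀S (fun x hx hx' => hDT x hx' hx) hT₀D₀
      (by rw [hTcard, hT₀c]) (by rw [hDcard, hD₀c]) hspace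
    have hSfix' : ∀ x ∈ Finset.Icc 1 n, σ⁻¹ x ∈ Finset.Icc 1 n := by
      intro x hx
      rw [← hSfix] at hx
      obtain ⟨w, hw, hwx⟩ := Finset.mem_image.1 hx
      have : σ⁻¹ x = w := by rw [← hwx]; exact Equiv.symm_apply_apply σ w
      rw [this]; exact hw
    have himinv : ∀ C : Finset ℕ, (C.image ⇑σ⁻¹).image ⇑σ = C := by
      intro C
      rw [Finset.image_image]
      have : ∀ x ∈ C, (⇑σ ∘ ⇑σ⁻¹) x = id x := fun x _ => Equiv.apply_symm_apply σ x
      rw [Finset.image_congr this, Finset.image_id]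
    -- transport of the subset-filter families
    have comp1 : ∀ m : ℕ, ((ksubsets (Finset.Icc 1 n) m).filter (fun A => T ⊆ A)).image
        (fun A => A.image ⇑σ) = (ksubsets (Finset.Icc 1 n) m).filter (fun A => T₀ ⊆ A) := by
      intro m
      ext C
      rw [Finset.mem_image]
      constructor
      · rintro ⟨A, hA, rfl⟩
        obtain ⟨hks, hTA⟩ := Finset.mem_filter.1 hA
        obtain ⟨hAS, hAc⟩ := mem_ksubsets.1 hks
        refine Finset.mem_filter.2 ⟨mem_ksubsets.2 ⟨?_, ?_⟩, ?_⟩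
        · intro y hy
          obtain ⟨w, hw, rfl⟩ := Finset.mem_image.1 hy
          exact hmapsto w (hAS hw)
        · rw [Finset.card_image_of_injective _ σ.injective, hAc]
        · rw [← himT]
          exact Finset.image_subset_image hTA
      · intro hC
        obtain ⟨hks, hTC⟩ := Finset.mem_filter.1 hC
        obtain ⟨hCS, hCc⟩ := mem_ksubsets.1 hks
        refine ⟨C.image ⇑σ⁻¹, Finset.mem_filter.2 ⟨mem_ksubsets.2 ⟨?_, ?_⟩, ?_⟩, himinv C⟩
        · intro y hy
          obtain ⟨w, hw, rfl⟩ := Finset.mem_image.1 hy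
          exact hSfix' w (hCS hw)
        · rw [Finset.card_image_of_injective _ (σ⁻¹).injective, hCc]
        · intro x hx
          have hσx : σ x ∈ C := hTC (by rw [← himT]; exact Finset.mem_image.2 ⟨x, hx, rfl⟩)
          exact Finset.mem_image.2 ⟨σ x, hσx, Equiv.symm_apply_apply σ x⟩
    -- transport of the main F-part
    have comp2 : ((ksubsets (Finset.Icc 1 n) k).filter
          (fun A => (A ∩ T).card = t ∧ 1 ≤ (A ∩ D).card)).image (fun A => A.image ⇑σ)
        = (ksubsets (Finset.Icc 1 n) k).filter
          (fun A => (A ∩ T₀).card = t ∧ 1 ≤ (A ∩ D₀).card) := by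
      ext C
      rw [Finset.mem_image]
      constructor
      · rintro ⟨A, hA, rfl⟩
        obtain ⟨hks, hc1, hc2⟩ := Finset.mem_filter.1 hA
        obtain ⟨hAS, hAc⟩ := mem_ksubsets.1 hks
        refine Finset.mem_filter.2 ⟨mem_ksubsets.2 ⟨?_, ?_⟩, ?_, ?_⟩
        · intro y hy
          obtain ⟨w, hw, rfl⟩ := Finset.mem_image.1 hy
          exact hmapsto w (hAS hw)
        · rw [Finset.card_image_of_injective _ σ.injective, hAc]
        · rw [← himT, ← Finset.image_inter _ _ σ.injective,
            Finset.card_image_of_injective _ σ.injective]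
          exact hc1
        · rw [← himD, ← Finset.image_inter _ _ σ.injective,
            Finset.card_image_of_injective _ σ.injective]
          exact hc2
      · intro hC
        obtain ⟨hks, hc1, hc2⟩ := Finset.mem_filter.1 hC
        obtain ⟨hCS, hCc⟩ := mem_ksubsets.1 hks
        have hback : ∀ W W₀ : Finset ℕ, W.image ⇑σ = W₀ →
            ((C.image ⇑σ⁻¹) ∩ W).card = (C ∩ W₀).card := by
          intro W W₀ hW
          have : ((C.image ⇑σ⁻¹) ∩ W).image ⇑σ = C ∩ W₀ := by
            rw [Finset.image_inter _ _ σ.injective, himinv C, hW]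
          rw [← this, Finset.card_image_of_injective _ σ.injective]
        refine ⟨C.image ⇑σ⁻¹, Finset.mem_filter.2 ⟨mem_ksubsets.2 ⟨?_, ?_⟩, ?_, ?_⟩, himinv C⟩
        · intro y hy
          obtain ⟨w, hw, rfl⟩ := Finset.mem_image.1 hy
          exact hSfix' w (hCS hw)
        · rw [Finset.card_image_of_injective _ (σ⁻¹).injective, hCc]
        · rw [hback T T₀ himT]; exact hc1
        · rw [hback D D₀ himD]; exact hc2
    -- transport of the special G-part
    have comp3 : (T.image (fun x => T.erase x ∪ D)).image (fun A => A.image ⇑σ)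
        = T₀.image (fun i => (Finset.Icc 1 (l+1)).erase i) := by
      rw [Finset.image_image]
      have hpt : ∀ x ∈ T, ((fun A => A.image ⇑σ) ∘ (fun x => T.erase x ∪ D)) x
          = ((fun i => (Finset.Icc 1 (l+1)).erase i) ∘ ⇑σ) x := by
        intro x hx
        show (T.erase x ∪ D).image ⇑σ = (Finset.Icc 1 (l+1)).erase (σ x)
        rw [Finset.image_union, Finset.image_erase σ.injective, himT, himD]
        have hσx : σ x ∈ T₀ := by rw [← himT]; exact Finset.mem_image.2 ⟨x, hx, rfl⟩
        have hσxD : σ x ∉ D₀ := hT₀D₀ _ hσx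
        rw [← hT₀D₀union]
        ext w
        rw [Finset.mem_union, Finset.mem_erase, Finset.mem_erase, Finset.mem_union]
        constructor
        · rintro (⟨h1, h2⟩ | h1)
          · exact ⟨h1, Or.inl h2⟩
          · exact ⟨fun h => hσxD (h ▸ h1), Or.inr h1⟩
        · rintro ⟨h1, h2 | h2⟩
          · exact Or.inl ⟨h1, h2⟩
          · exact Or.inr h2
      rw [Finset.image_congr hpt, ← Finset.image_image, himT]
    refine ⟨σ, hmapsto, ?_, ?_⟩
    · show F.image (fun A => A.image ⇑σ) = famC2 n k t l
      rw [FeqDef, Finset.image_union, comp2, comp1 k]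
      rfl
    · show G.image (fun A => A.image ⇑σ) = famC1 n l t
      rw [GeqDef, Finset.image_union, comp3, comp1 l]
      rfl
  exact ⟨card_bound, part2⟩
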